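/- Let V be a finite-dimensional vector space over a field of characteristic ≠ 2 with a nondegenerate quadratic form Q (with bilinear form β), graded V = ⊕_a V^a with β(V^a,V^b)=0 for a+b≠0, and let A : V → V be β-skew (β(Av,v')=−β(v,Av')) with A(V^a) ⊆ V^{a+2}. Then A^{2n} : V^{-2n} → V^{2n} is an isomorphism for all n ≥ 1 if and only if for all n ≥ 1 the map A^n : V^0 → V^{2n} is surjective and Q restricted to ker(A^n : V^0 → V^{2n}) is nondegenerate. -/

import Mathlib

/-- Characteristic ≠ 2: for an o-good graded quadratic space and a β-skew degree-2
endomorphism `A`, `A^{2n} : V^{-2n} → V^{2n}` is an isomorphism for all `n ≥ 1` iff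
`A^n : V^0 → V^{2n}` is surjective and `Q` restricted to its kernel is nondegenerate,
for all `n ≥ 1`. -/
theorem stmt_6 {k V : Type*} [Field k] [AddCommGroup V] [Module k V]
    [FiniteDimensional k V] (hchar : (2 : k) ≠ 0)
    (Vg : ℤ → Submodule k V) (hV : DirectSum.IsInternal Vg)
    (hdim : ∀ a : ℤ, Module.finrank k (Vg a) = Module.finrank k (Vg (-a)))
    (Q : QuadraticForm k V)
    (hnd : ∀ v : V, (∀ w, QuadraticMap.polar Q v w = 0) → v = 0)
    (hortho : ∀ a b : ℤ, a + b ≠ 0 → ∀ x ∈ Vg a, ∀ y ∈ Vg b, QuadraticMap.polar Q x y = 0)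
    (hQzero : ∀ a : ℤ, a ≠ 0 → ∀ x ∈ Vg a, Q x = 0)
    (A : V →ₗ[k] V) (hA : ∀ a : ℤ, ∀ x ∈ Vg a, A x ∈ Vg (a + 2))
    (hskew : ∀ v w, QuadraticMap.polar Q (A v) w = - QuadraticMap.polar Q v (A w)) :
    (∀ n : ℕ, 1 ≤ n →
      Submodule.map (A ^ (2 * n)) (Vg (-(2 * (n : ℤ)))) = Vg (2 * (n : ℤ)) ∧
      ∀ x ∈ Vg (-(2 * (n : ℤ))), (A ^ (2 * n)) x = 0 → x = 0)
    ↔ (∀ n : ℕ, 1 ≤ n →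
      Submodule.map (A ^ n) (Vg 0) = Vg (2 * (n : ℤ)) ∧
      ∀ x ∈ Vg 0, (A ^ n) x = 0 →
        (∀ y ∈ Vg 0, (A ^ n) y = 0 → QuadraticMap.polar Q x y = 0) → x = 0) := by
  -- iterated grading shift
  have hApow : ∀ (m : ℕ) (a : ℤ), ∀ x ∈ Vg a, (A ^ m) x ∈ Vg (a + 2 * m) := by
    intro m
    induction m with
    | zero => intro a x hx; simpa using hx
    | succ m ih =>
      intro a x hx
      have e1 : (A ^ (m + 1)) x = A ((A ^ m) x) := by rw [pow_succ']; rfl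
      have h2 := hA (a + 2 * m) _ (ih a x hx)
      rw [e1]
      convert h2 using 2
      push_cast; ring
  -- iterated skewness
  have hskewpow : ∀ (m : ℕ) (x y : V), QuadraticMap.polar Q ((A ^ m) x) y
      = (-1 : k) ^ m * QuadraticMap.polar Q x ((A ^ m) y) := by
    intro m
    induction m with
    | zero => intro x y; simp
    | succ m ih =>
      intro x y
      have e1 : (A ^ (m + 1)) x = A ((A ^ m) x) := by rw [pow_succ']; rfl
      have e2 : (A ^ m) (A y) = (A ^ (m + 1)) y := by rw [pow_succ]; rfl
      rw [e1, hskew, ih, e2, pow_succ]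
      ring
  have hpow2 : ∀ (m : ℕ) (x : V), (A ^ (2 * m)) x = (A ^ m) ((A ^ m) x) := by
    intro m x
    rw [two_mul, pow_add]; rfl
  -- nondegeneracy of pairing between Vg a and Vg (-a)
  have hpair : ∀ (a : ℤ) (x : V), x ∈ Vg a →
      (∀ y ∈ Vg (-a), QuadraticMap.polar Q x y = 0) → x = 0 := by
    intro a x hx h
    refine hnd x fun w => ?_
    have hw : w ∈ ⨆ i, Vg i := by rw [hV.submodule_iSup_eq_top]; trivial
    refine Submodule.iSup_induction (motive := fun w => QuadraticMap.polar Q x w = 0) Vg hw ?_ ?_ ?_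
    · intro b y hy
      by_cases hb : b = -a
      · exact h y (hb ▸ hy)
      · exact hortho a b (by omega) x hx y hy
    · exact QuadraticMap.polar_zero_right Q x
    · intro u v hu hv
      rw [QuadraticMap.polar_add_right, hu, hv, add_zero]
  constructor
  · -- forward
    intro H n hn
    obtain ⟨hsur2, hinj2⟩ := H n hn
    have hmem0 : ∀ u ∈ Vg (-(2 * (n : ℤ))), (A ^ n) u ∈ Vg 0 := by
      intro u hu
      have h := hApow n _ u hu
      rwa [show -(2 * (n : ℤ)) + 2 * (n : ℕ) = 0 by push_cast; ring] at h
    have hmem2 : ∀ x ∈ Vg 0, (A ^ n) x ∈ Vg (2 * (n : ℤ)) := by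
      intro x hx
      have h := hApow n _ x hx
      rwa [show (0 : ℤ) + 2 * (n : ℕ) = 2 * (n : ℤ) by push_cast; ring] at h
    have hsur1 : Submodule.map (A ^ n) (Vg 0) = Vg (2 * (n : ℤ)) := by
      apply le_antisymm
      · rintro _ ⟨x, hx, rfl⟩
        exact hmem2 x hx
      · intro v hv
        rw [← hsur2] at hv
        obtain ⟨u, hu, huv⟩ := hv
        exact ⟨(A ^ n) u, hmem0 u hu, by rw [← hpow2, huv]⟩
    refine ⟨hsur1, ?_⟩
    intro x hx hxker hperp
    refine hpair 0 x hx fun y hy => ?_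
    rw [show -(0 : ℤ) = 0 by ring] at hy
    -- y ∈ Vg 0 : decompose A^n y via surjectivity of A^{2n}
    have hAy : (A ^ n) y ∈ Vg (2 * (n : ℤ)) := hmem2 y hy
    rw [← hsur2] at hAy
    obtain ⟨u, hu, huy⟩ := hAy
    have hker' : y - (A ^ n) u ∈ Vg 0 := Submodule.sub_mem _ hy (hmem0 u hu)
    have hker'' : (A ^ n) (y - (A ^ n) u) = 0 := by
      rw [map_sub, ← hpow2, huy, sub_self]
    have h1 : QuadraticMap.polar Q x (y - (A ^ n) u) = 0 := hperp _ hker' hker''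
    have h2 : QuadraticMap.polar Q x ((A ^ n) u) = 0 := by
      rw [QuadraticMap.polar_comm, hskewpow, hxker, QuadraticMap.polar_zero_right, mul_zero]
    calc QuadraticMap.polar Q x y
        = QuadraticMap.polar Q x ((y - (A ^ n) u) + (A ^ n) u) := by congr 1; abel
      _ = 0 := by rw [QuadraticMap.polar_add_right, h1, h2, add_zero]
  · -- backward
    intro H n hn
    obtain ⟨hsur1, hker1⟩ := H n hn
    have hmem0 : ∀ u ∈ Vg (-(2 * (n : ℤ))), (A ^ n) u ∈ Vg 0 := by
      intro u hu
      have h := hApow n _ u hu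
      rwa [show -(2 * (n : ℤ)) + 2 * (n : ℕ) = 0 by push_cast; ring] at h
    have hmem2 : ∀ x ∈ Vg 0, (A ^ n) x ∈ Vg (2 * (n : ℤ)) := by
      intro x hx
      have h := hApow n _ x hx
      rwa [show (0 : ℤ) + 2 * (n : ℕ) = 2 * (n : ℤ) by push_cast; ring] at h
    -- injectivity of A^{2n} on Vg (-2n)
    have hinj2 : ∀ u ∈ Vg (-(2 * (n : ℤ))), (A ^ (2 * n)) u = 0 → u = 0 := by
      intro u hu hu0
      have hAu0 : (A ^ n) u ∈ Vg 0 := hmem0 u hu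
      have hAuk : (A ^ n) ((A ^ n) u) = 0 := by rw [← hpow2, hu0]
      have hAu : (A ^ n) u = 0 := by
        refine hker1 _ hAu0 hAuk fun y hy hy0 => ?_
        rw [hskewpow, hy0, QuadraticMap.polar_zero_right, mul_zero]
      refine hpair _ u hu fun y hy => ?_
      rw [show -(-(2 * (n : ℤ))) = 2 * (n : ℤ) by ring] at hy
      rw [← hsur1] at hy
      obtain ⟨x, hx, rfl⟩ := hy
      rw [QuadraticMap.polar_comm, hskewpow, hAu, QuadraticMap.polar_zero_right, mul_zero]
    refine ⟨?_, hinj2⟩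
    -- surjectivity via dimension counting
    set K : Submodule k V := Vg 0 ⊓ LinearMap.ker (A ^ n) with hK
    set L : Submodule k V := Submodule.map (A ^ n) (Vg (-(2 * (n : ℤ)))) with hL
    have hLle : L ≤ Vg 0 := by
      rintro _ ⟨u, hu, rfl⟩; exact hmem0 u hu
    have hdisj : Disjoint K L := by
      rw [disjoint_iff]
      rw [eq_bot_iff]
      rintro z ⟨⟨hz0, hzk⟩, u, hu, rfl⟩
      have : (A ^ (2 * n)) u = 0 := by rw [hpow2]; exact hzk
      have := hinj2 u hu this
      simp [this]
    -- A^n injective on Vg (-2n)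
    have hinjL : Function.Injective ((A ^ n).domRestrict (Vg (-(2 * (n : ℤ))))) := by
      rw [← LinearMap.ker_eq_bot, eq_bot_iff]
      rintro ⟨u, hu⟩ hu0
      have hu0' : (A ^ n) u = 0 := hu0
      have : (A ^ (2 * n)) u = 0 := by rw [hpow2, hu0', map_zero]
      have := hinj2 u hu this
      simpa using this
    have hrkL : Module.finrank k L = Module.finrank k (Vg (-(2 * (n : ℤ)))) := by
      rw [hL, ← LinearMap.range_domRestrict]
      exact LinearMap.finrank_range_of_inj hinjL
    -- rank-nullity for A^n restricted to Vg 0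
    have hrkK : Module.finrank k (Vg (2 * (n : ℤ))) + Module.finrank k K
        = Module.finrank k (Vg 0) := by
      have h1 := LinearMap.finrank_range_add_finrank_ker ((A ^ n).domRestrict (Vg 0))
      rw [LinearMap.range_domRestrict, hsur1, LinearMap.ker_domRestrict] at h1
      have h2 : Module.finrank k (Submodule.comap (Vg 0).subtype (LinearMap.ker (A ^ n)))
          = Module.finrank k K := by
        rw [hK, ← Submodule.map_comap_subtype]
        exact (Submodule.finrank_map_subtype_eq (Vg 0) _).symm
      rw [h2] at h1
      exact h1
    have hsup : K ⊔ L = Vg 0 := by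
      apply Submodule.eq_of_le_of_finrank_eq (sup_le inf_le_left hLle)
      have h3 := Submodule.finrank_sup_add_finrank_inf_eq K L
      rw [hdisj.eq_bot, finrank_bot, add_zero] at h3
      rw [h3, hrkL, ← hdim, ← hrkK]
      ring
    -- conclude surjectivity of A^{2n}
    have hmapK : Submodule.map (A ^ n) K = ⊥ := by
      rw [eq_bot_iff]
      rintro _ ⟨x, ⟨hx0, hxk⟩, rfl⟩
      simpa using hxk
    have : Submodule.map (A ^ (2 * n)) (Vg (-(2 * (n : ℤ))))
        = Submodule.map (A ^ n) L := by
      rw [hL, two_mul, pow_add, Module.End.mul_eq_comp, Submodule.map_comp]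
    rw [this, ← hsur1, ← hsup, Submodule.map_sup, hmapK, bot_sup_eq]
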